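/- For every integer p ≥ 0, ∑_{q=1}^∞ ( ∑_{(s_1,…,s_q) ∈ ℕ^q with s_1+⋯+s_q = p} θ̄(s_1)·θ(s_2)⋯θ(s_q) ) = 1, where θ̄(s) := ∑_{j=s+1}^∞ θ(j) and for each q the inner sum runs over all q-tuples of nonnegative integers summing to p. -/

import Mathlib

/-- The critical offspring distribution: θ(k) = 3·(2k−1)!! / (2^{k+1}·(k+2)!),
with (2k−1)!! read as 1 when k = 0 (natural subtraction gives 0!! = 1). -/
noncomputable def theta (k : ℕ) : ℝ :=
  3 * (Nat.doubleFactorial (2 * k - 1) : ℝ) / (2 ^ (k + 1) * (Nat.factorial (k + 2) : ℝ))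

/-- The strict tail θ̄(s) = ∑_{j=s+1}^∞ θ(j). -/
noncomputable def thetaBar (s : ℕ) : ℝ := ∑' j : ℕ, theta (s + 1 + j)

noncomputable def AA (k : ℕ) : ℝ :=
  (Nat.doubleFactorial (2 * k - 1) : ℝ) / (2 ^ k * (Nat.factorial (k + 1) : ℝ))
lemma AA_zero : AA 0 = 1 := by simp [AA, Nat.doubleFactorial, Nat.factorial]
lemma AA_nonneg (k : ℕ) : 0 ≤ AA k := by unfold AA; positivity
lemma theta_nonneg (k : ℕ) : 0 ≤ theta k := by unfold theta; positivity
lemma dfac_succ (k : ℕ) :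
    Nat.doubleFactorial (2 * (k + 1) - 1) = (2 * k + 1) * Nat.doubleFactorial (2 * k - 1) := by
  cases k with
  | zero => simp [Nat.doubleFactorial]
  | succ n =>
    have h1 : 2 * (n + 1 + 1) - 1 = (2 * (n + 1) - 1) + 2 := by omega
    have h2 : (2 * (n + 1) - 1) + 2 = 2 * (n + 1) + 1 := by omega
    rw [h1, Nat.doubleFactorial_add_two, h2]
lemma theta_eq (k : ℕ) : theta k = AA k - AA (k + 1) := by
  unfold theta AA
  rw [dfac_succ]
  have hf : (Nat.factorial (k + 1 + 1) : ℝ) = (k + 2) * Nat.factorial (k + 1) := by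
    rw [Nat.factorial_succ]; push_cast; ring
  rw [hf]
  have h1 : (0:ℝ) < 2 ^ k := by positivity
  have h2 : (0:ℝ) < (Nat.factorial (k + 1) : ℝ) := by positivity
  have h3 : (0:ℝ) < (k:ℝ) + 2 := by positivity
  push_cast; field_simp; ring

lemma AA_rec (k : ℕ) : 2 * ((k:ℝ) + 2) * AA (k + 1) = (2 * k + 1) * AA k := by
  unfold AA
  rw [dfac_succ]
  have hf : (Nat.factorial (k + 1 + 1) : ℝ) = (k + 2) * Nat.factorial (k + 1) := by
    rw [Nat.factorial_succ]; push_cast; ring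
  rw [hf]
  have h1 : (0:ℝ) < 2 ^ k := by positivity
  have h2 : (0:ℝ) < (Nat.factorial (k + 1) : ℝ) := by positivity
  have h3 : (0:ℝ) < (k:ℝ) + 2 := by positivity
  push_cast; field_simp; ring

lemma AA_sq (k : ℕ) : AA k ^ 2 * ((k:ℝ) + 1) ≤ 1 := by
  induction k with
  | zero => simp [AA_zero]
  | succ n ih =>
    have h := AA_rec n
    have h2 : (2 * ((n:ℝ) + 2) * AA (n + 1)) ^ 2 = ((2 * n + 1) * AA n) ^ 2 := by rw [h]
    have hn : (0:ℝ) ≤ (n:ℝ) := Nat.cast_nonneg n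
    push_cast
    nlinarith [h2, ih, sq_nonneg (AA n), sq_nonneg (AA (n+1)), AA_nonneg n, AA_nonneg (n+1)]

lemma AA_tendsto : Filter.Tendsto AA Filter.atTop (nhds 0) := by
  have hb : ∀ k : ℕ, AA k ≤ Real.sqrt (1 / ((k:ℝ) + 1)) := by
    intro k
    have h1 : AA k ^ 2 ≤ 1 / ((k:ℝ) + 1) := by
      have hk : (0:ℝ) < (k:ℝ) + 1 := by positivity
      rw [le_div_iff₀ hk]; exact AA_sq k
    calc AA k = Real.sqrt (AA k ^ 2) := by rw [Real.sqrt_sq (AA_nonneg k)]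
    _ ≤ Real.sqrt (1 / ((k:ℝ) + 1)) := Real.sqrt_le_sqrt h1
  apply squeeze_zero AA_nonneg hb
  have h0 : Filter.Tendsto (fun k : ℕ => 1 / ((k:ℝ) + 1)) Filter.atTop (nhds 0) :=
    tendsto_one_div_add_atTop_nhds_zero_nat
  have := (Real.continuous_sqrt.tendsto' 0 0 Real.sqrt_zero).comp h0
  exact this

lemma sum_range_theta (m n : ℕ) : ∑ j ∈ Finset.range n, theta (m + j) = AA m - AA (m + n) := by
  have := Finset.sum_range_sub' (fun j => AA (m + j)) n
  simp only [add_zero] at this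
  rw [← this]
  exact Finset.sum_congr rfl (fun j _ => theta_eq (m + j))

lemma hasSum_theta_tail (m : ℕ) : HasSum (fun j => theta (m + j)) (AA m) := by
  have hnn : ∀ j, 0 ≤ theta (m + j) := fun j => theta_nonneg _
  have hb : ∀ n, ∑ j ∈ Finset.range n, theta (m + j) ≤ AA m := by
    intro n; rw [sum_range_theta]; have := AA_nonneg (m + n); linarith
  have hs : Summable (fun j => theta (m + j)) := summable_of_sum_range_le hnn hb
  have ht : Filter.Tendsto (fun n => ∑ j ∈ Finset.range n, theta (m + j))
      Filter.atTop (nhds (AA m)) := by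
    have h2 : Filter.Tendsto (fun n : ℕ => AA (m + n)) Filter.atTop (nhds 0) := by
      have := AA_tendsto.comp (Filter.tendsto_add_atTop_nat m)
      simpa [Function.comp_def, Nat.add_comm] using this
    have := (tendsto_const_nhds (x := AA m)).sub h2
    simp only [sub_zero] at this
    convert this using 2 with n
    exact sum_range_theta m n
  have := hs.hasSum.tendsto_sum_nat
  have heq : (∑' j, theta (m + j)) = AA m := tendsto_nhds_unique this ht
  exact heq ▸ hs.hasSum

lemma hasSum_theta : HasSum theta 1 := by
  have := hasSum_theta_tail 0
  rw [AA_zero] at this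
  simpa using this

lemma thetaBar_eq (s : ℕ) : thetaBar s = AA (s + 1) := (hasSum_theta_tail (s + 1)).tsum_eq

lemma thetaBar_nonneg (s : ℕ) : 0 ≤ thetaBar s := by rw [thetaBar_eq]; exact AA_nonneg _

lemma thetaBar_formula (s : ℕ) : thetaBar s = 1 - ∑ j ∈ Finset.range (s + 1), theta j := by
  rw [thetaBar_eq]
  have := sum_range_theta 0 (s + 1)
  simp only [Nat.zero_add] at this
  rw [this, AA_zero]; ring

lemma theta_le_one (k : ℕ) : theta k ≤ 1 :=
  le_hasSum hasSum_theta k (fun j _ => theta_nonneg j)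

lemma theta_zero : theta 0 = 3 / 4 := by
  norm_num [theta, Nat.doubleFactorial, Nat.factorial]

open Finset Filter

noncomputable def dd (q b : ℕ) : ℝ :=
  ∑ t ∈ Finset.Nat.antidiagonalTuple q b, ∏ i, theta (t i)

lemma sum_AT_succ {M : Type*} [AddCommMonoid M] {q b : ℕ} (f : (Fin (q + 1) → ℕ) → M) :
    ∑ t ∈ Finset.Nat.antidiagonalTuple (q + 1) b, f t
      = ∑ x ∈ Finset.HasAntidiagonal.antidiagonal b, ∑ t ∈ Finset.Nat.antidiagonalTuple q x.2,
          f (Fin.cons x.1 t) := by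
  rw [Finset.sum_sigma']
  refine Finset.sum_nbij'
    (i := fun t => (⟨(t 0, ∑ i, Fin.tail t i), Fin.tail t⟩ : (_ : ℕ × ℕ) × (Fin q → ℕ)))
    (j := fun p => Fin.cons p.1.1 p.2) ?_ ?_ ?_ ?_ ?_
  · intro t ht
    rw [Finset.Nat.mem_antidiagonalTuple] at ht
    rw [Finset.mem_sigma, Finset.HasAntidiagonal.mem_antidiagonal, Finset.Nat.mem_antidiagonalTuple]
    constructor
    · rw [← ht, Fin.sum_univ_succ]
      rfl
    · rfl
  · intro p hp
    rw [Finset.mem_sigma, Finset.HasAntidiagonal.mem_antidiagonal, Finset.Nat.mem_antidiagonalTuple] at hp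
    rw [Finset.Nat.mem_antidiagonalTuple, Fin.sum_cons, hp.2, hp.1]
  · intro t ht
    simp [Fin.cons_self_tail]
  · rintro ⟨⟨a, c⟩, t⟩ hp
    rw [Finset.mem_sigma, Finset.HasAntidiagonal.mem_antidiagonal, Finset.Nat.mem_antidiagonalTuple] at hp
    simp [Fin.tail_cons, hp.2]
  · intro t ht
    rw [Fin.cons_self_tail]

lemma dd_zero (b : ℕ) : dd 0 b = if b = 0 then 1 else 0 := by
  cases b with
  | zero => simp [dd, Finset.Nat.antidiagonalTuple_zero_zero]
  | succ n => simp [dd, Finset.Nat.antidiagonalTuple_zero_succ]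

lemma dd_succ (q b : ℕ) :
    dd (q + 1) b = ∑ x ∈ Finset.HasAntidiagonal.antidiagonal b, theta x.1 * dd q x.2 := by
  rw [dd, sum_AT_succ]
  refine Finset.sum_congr rfl fun x _ => ?_
  rw [dd, Finset.mul_sum]
  refine Finset.sum_congr rfl fun t _ => ?_
  simp [Fin.prod_univ_succ]

lemma dd_nonneg (q b : ℕ) : 0 ≤ dd q b :=
  Finset.sum_nonneg fun t _ => Finset.prod_nonneg fun i _ => theta_nonneg _

noncomputable def ee (m p : ℕ) : ℝ := ∑ b ∈ Finset.range (p + 1), dd m b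

lemma ee_nonneg (m p : ℕ) : 0 ≤ ee m p :=
  Finset.sum_nonneg fun b _ => dd_nonneg m b

lemma ee_zero (p : ℕ) : ee 0 p = 1 := by
  simp [ee, dd_zero]

lemma sum_antidiagonal_dd (q p : ℕ) :
    ∑ x ∈ Finset.HasAntidiagonal.antidiagonal p, dd q x.2 = ee q p := by
  rw [Finset.Nat.sum_antidiagonal_eq_sum_range_succ_mk, ee]
  simpa using Finset.sum_range_reflect (fun i => dd q i) (p + 1)

lemma ee_succ (q p : ℕ) :
    ee (q + 1) p
      = ∑ x ∈ Finset.HasAntidiagonal.antidiagonal p, (∑ j ∈ Finset.range (x.1 + 1), theta j) * dd q x.2 := by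
  induction p with
  | zero => simp [ee, dd_succ]
  | succ p ih =>
    have h1 : ee (q + 1) (p + 1) = ee (q + 1) p + dd (q + 1) (p + 1) := by
      rw [ee, ee, Finset.sum_range_succ]
    rw [h1, ih, dd_succ q (p + 1)]
    rw [Finset.Nat.antidiagonal_succ, Finset.sum_cons, Finset.sum_cons, Finset.sum_map,
      Finset.sum_map]
    simp only [Function.Embedding.coe_prodMap, Function.Embedding.coeFn_mk,
      Function.Embedding.refl_apply, Prod.map_fst, Prod.map_snd]
    have h2 : ∀ x : ℕ × ℕ, (∑ j ∈ Finset.range (Nat.succ x.1 + 1), theta j) * dd q x.2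
        = (∑ j ∈ Finset.range (x.1 + 1), theta j) * dd q x.2 + theta (x.1 + 1) * dd q x.2 := by
      intro x
      rw [Finset.sum_range_succ]
      ring
    rw [Finset.sum_congr rfl fun x _ => h2 x, Finset.sum_add_distrib]
    simp [Finset.sum_range_succ, theta_zero]
    ring

noncomputable def cc (q p : ℕ) : ℝ :=
  ∑ s ∈ Finset.Nat.antidiagonalTuple (q + 1) p,
    thetaBar (s 0) * ∏ i ∈ Finset.univ.erase (0 : Fin (q + 1)), theta (s i)

lemma erase_prod {q : ℕ} (g : Fin (q + 1) → ℝ) :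
    ∏ i ∈ (Finset.univ : Finset (Fin (q + 1))).erase 0, g i = ∏ i : Fin q, g i.succ := by
  rw [Fin.univ_succ, Finset.erase_cons, Finset.prod_map]
  rfl

lemma cc_eq (q p : ℕ) :
    cc q p = ∑ x ∈ Finset.HasAntidiagonal.antidiagonal p, thetaBar x.1 * dd q x.2 := by
  rw [cc, sum_AT_succ]
  refine Finset.sum_congr rfl fun x _ => ?_
  rw [dd, Finset.mul_sum]
  refine Finset.sum_congr rfl fun t _ => ?_
  rw [erase_prod]
  simp [Fin.cons_zero, Fin.cons_succ]

lemma cc_key (q p : ℕ) : cc q p = ee q p - ee (q + 1) p := by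
  rw [cc_eq, ee_succ, ← sum_antidiagonal_dd q p, ← Finset.sum_sub_distrib]
  refine Finset.sum_congr rfl fun x _ => ?_
  rw [thetaBar_formula]
  ring

lemma cc_nonneg (q p : ℕ) : 0 ≤ cc q p :=
  Finset.sum_nonneg fun t _ => mul_nonneg (thetaBar_nonneg _)
    (Finset.prod_nonneg fun i _ => theta_nonneg _)

lemma card_AT_le : ∀ m b : ℕ, (Finset.Nat.antidiagonalTuple m b).card ≤ (m + 1) ^ b := by
  intro m
  induction m with
  | zero =>
    intro b
    cases b with
    | zero => simp [Finset.Nat.antidiagonalTuple_zero_zero]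
    | succ n => simp [Finset.Nat.antidiagonalTuple_zero_succ]
  | succ m ih =>
    intro b
    have hcard : (Finset.Nat.antidiagonalTuple (m + 1) b).card
        = ∑ x ∈ Finset.HasAntidiagonal.antidiagonal b, (Finset.Nat.antidiagonalTuple m x.2).card := by
      rw [Finset.card_eq_sum_ones, sum_AT_succ (M := ℕ)]
      exact Finset.sum_congr rfl fun x _ => (Finset.card_eq_sum_ones _).symm
    rw [hcard]
    calc ∑ x ∈ Finset.HasAntidiagonal.antidiagonal b, (Finset.Nat.antidiagonalTuple m x.2).card
        ≤ ∑ x ∈ Finset.HasAntidiagonal.antidiagonal b, (m + 1) ^ x.2 :=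
          Finset.sum_le_sum fun x _ => ih x.2
      _ = ∑ c ∈ Finset.range (b + 1), (m + 1) ^ c := by
          rw [Finset.Nat.sum_antidiagonal_eq_sum_range_succ_mk]
          simpa using Finset.sum_range_reflect (fun c => (m + 1) ^ c) (b + 1)
      _ ≤ (m + 2) ^ b := by
          clear hcard
          induction b with
          | zero => simp
          | succ b ihb =>
            rw [Finset.sum_range_succ]
            have h1 : (m + 1) ^ (b + 1) ≤ (m + 1) * (m + 2) ^ b := by
              rw [pow_succ, mul_comm]
              exact Nat.mul_le_mul_left _ (Nat.pow_le_pow_left (by omega) b)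
            have h2 : (m + 2) ^ (b + 1) = (m + 2) ^ b + (m + 1) * (m + 2) ^ b := by ring
            omega

lemma prod_theta_le {m b : ℕ} (t : Fin m → ℕ) (ht : ∑ i, t i = b) :
    ∏ i, theta (t i) ≤ (3 / 4 : ℝ) ^ (m - b) := by
  classical
  have hcardN : (Finset.univ.filter fun i => ¬ t i = 0).card ≤ b := by
    calc (Finset.univ.filter fun i => ¬ t i = 0).card
        = ∑ i ∈ Finset.univ.filter (fun i => ¬ t i = 0), 1 := Finset.card_eq_sum_ones _
      _ ≤ ∑ i ∈ Finset.univ.filter (fun i => ¬ t i = 0), t i :=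
          Finset.sum_le_sum fun i hi => by
            have := (Finset.mem_filter.mp hi).2; omega
      _ ≤ ∑ i, t i := Finset.sum_le_sum_of_subset (Finset.filter_subset _ _)
      _ = b := ht
  have hcardZ : m - b ≤ (Finset.univ.filter fun i => t i = 0).card := by
    have := Finset.card_filter_add_card_filter_not
      (s := (Finset.univ : Finset (Fin m))) (p := fun i => t i = 0)
    simp only [Finset.card_univ, Fintype.card_fin] at this
    omega
  calc ∏ i, theta (t i) ≤ ∏ i, (if t i = 0 then (3/4 : ℝ) else 1) := by
        refine Finset.prod_le_prod (fun i _ => theta_nonneg _) (fun i _ => ?_)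
        split_ifs with h
        · rw [h, theta_zero]
        · exact theta_le_one _
    _ = (3/4 : ℝ) ^ (Finset.univ.filter fun i => t i = 0).card := by
        rw [Finset.prod_ite, Finset.prod_const, Finset.prod_const, one_pow, mul_one]
    _ ≤ (3/4 : ℝ) ^ (m - b) :=
        pow_le_pow_of_le_one (by norm_num) (by norm_num) hcardZ

lemma dd_le (m b : ℕ) : dd m b ≤ ((m + 1) ^ b : ℕ) * (3 / 4 : ℝ) ^ (m - b) := by
  have h1 : dd m b ≤ (Finset.Nat.antidiagonalTuple m b).card • ((3 / 4 : ℝ) ^ (m - b)) := by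
    refine Finset.sum_le_card_nsmul _ _ _ fun t htm => ?_
    exact prod_theta_le t (Finset.Nat.mem_antidiagonalTuple.mp htm)
  rw [nsmul_eq_mul] at h1
  refine h1.trans ?_
  refine mul_le_mul_of_nonneg_right ?_ (by positivity)
  exact_mod_cast card_AT_le m b

lemma dd_tendsto (b : ℕ) : Tendsto (fun m => dd m b) atTop (nhds 0) := by
  have hr : ‖(3 / 4 : ℝ)‖ < 1 := by rw [Real.norm_eq_abs, abs_of_nonneg (by norm_num : (0:ℝ) ≤ 3/4)]; norm_num
  have hsum : Summable (fun n : ℕ => (n : ℝ) ^ b * (3 / 4 : ℝ) ^ n) :=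
    summable_pow_mul_geometric_of_norm_lt_one b hr
  have h0 : Tendsto (fun n : ℕ => (n : ℝ) ^ b * (3 / 4 : ℝ) ^ n) atTop (nhds 0) :=
    hsum.tendsto_atTop_zero
  have hC : Tendsto (fun n : ℕ => ((2 : ℝ) ^ b * (4 / 3 : ℝ) ^ b)
      * ((n : ℝ) ^ b * (3 / 4 : ℝ) ^ n)) atTop (nhds 0) := by
    simpa using h0.const_mul ((2 : ℝ) ^ b * (4 / 3 : ℝ) ^ b)
  refine squeeze_zero' ?_ ?_ hC
  · exact Filter.Eventually.of_forall fun m => dd_nonneg m b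
  · filter_upwards [Filter.eventually_ge_atTop (max b 1)] with m hm
    have hmb : b ≤ m := le_trans (le_max_left _ _) hm
    have hm1 : 1 ≤ m := le_trans (le_max_right _ _) hm
    have hpow : (3 / 4 : ℝ) ^ (m - b) = (3 / 4 : ℝ) ^ m * (4 / 3 : ℝ) ^ b := by
      rw [pow_sub₀ _ (by norm_num) hmb, div_eq_mul_inv, ← inv_pow]
      norm_num
    calc dd m b ≤ ((m + 1) ^ b : ℕ) * (3 / 4 : ℝ) ^ (m - b) := dd_le m b
      _ = ((m : ℝ) + 1) ^ b * ((3 / 4 : ℝ) ^ m * (4 / 3 : ℝ) ^ b) := by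
          rw [hpow]; push_cast; ring
      _ ≤ ((2 : ℝ) * m) ^ b * ((3 / 4 : ℝ) ^ m * (4 / 3 : ℝ) ^ b) := by
          refine mul_le_mul_of_nonneg_right (pow_le_pow_left₀ (by positivity) ?_ b)
            (by positivity)
          have h1m : (1 : ℝ) ≤ (m : ℝ) := by exact_mod_cast hm1
          linarith
      _ = (2 : ℝ) ^ b * (4 / 3 : ℝ) ^ b * ((m : ℝ) ^ b * (3 / 4 : ℝ) ^ m) := by ring

lemma ee_tendsto (p : ℕ) : Tendsto (fun m => ee m p) atTop (nhds 0) := by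
  have := tendsto_finset_sum (Finset.range (p + 1))
    (fun b (_ : b ∈ Finset.range (p + 1)) => dd_tendsto b)
  simpa [ee] using this


/-- For every p ≥ 0,
∑_{q=1}^∞ ( ∑_{s₁+⋯+s_q = p} θ̄(s₁)·θ(s₂)⋯θ(s_q) ) = 1,
where the inner sum is over q-tuples of nonnegative integers summing to p. -/
theorem overshoot_identity (p : ℕ) :
    HasSum
      (fun q : ℕ =>
        ∑ s ∈ Finset.Nat.antidiagonalTuple (q + 1) p,
          thetaBar (s 0) * ∏ i ∈ Finset.univ.erase (0 : Fin (q + 1)), theta (s i))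
      1 := by
  have hcc : (fun q : ℕ =>
      ∑ s ∈ Finset.Nat.antidiagonalTuple (q + 1) p,
        thetaBar (s 0) * ∏ i ∈ Finset.univ.erase (0 : Fin (q + 1)), theta (s i))
      = fun q => cc q p := rfl
  rw [hcc]
  have hpartial : ∀ Q, ∑ q ∈ Finset.range Q, cc q p = 1 - ee Q p := by
    intro Q
    have h1 : ∀ q, cc q p = ee q p - ee (q + 1) p := fun q => cc_key q p
    calc ∑ q ∈ Finset.range Q, cc q p
        = ∑ q ∈ Finset.range Q, (ee q p - ee (q + 1) p) :=
          Finset.sum_congr rfl fun q _ => h1 q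
      _ = ee 0 p - ee Q p := Finset.sum_range_sub' (fun q => ee q p) Q
      _ = 1 - ee Q p := by rw [ee_zero]
  have htend : Tendsto (fun Q => ∑ q ∈ Finset.range Q, cc q p) atTop (nhds 1) := by
    have := (tendsto_const_nhds (x := (1:ℝ)) (f := atTop)).sub (ee_tendsto p)
    simp only [sub_zero] at this
    convert this using 2 with Q
    exact hpartial Q
  have hs : Summable (fun q => cc q p) := by
    refine summable_of_sum_range_le (c := 1) (fun q => cc_nonneg q p) fun Q => ?_
    rw [hpartial Q]
    have := ee_nonneg Q p
    linarith
  have := hs.hasSum.tendsto_sum_nat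
  have heq : (∑' q, cc q p) = 1 := tendsto_nhds_unique this htend
  exact heq ▸ hs.hasSum
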